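/- Let b₁, …, b_N ∈ ℂ \ {0} (N ≥ 3) be such that, writing arguments in [0, 2π), one has arg(b_j) ≤ arg(b_{j+1}) < arg(b_j) + π for j = 1, …, N−1 and arg(b_N) > arg(b_1) + π. Then there exists a constant C > 0 such that for every z ∈ ℂ there is an index j ∈ {1, …, N} with Re(b_j z^d) ≥ 2C|z|^d, for any fixed positive integer d. -/

import Mathlib

open Real

/-- The argument of a nonzero complex number chosen in [0, 2π). -/
noncomputable def arg2pi (z : ℂ) : ℝ :=
  if Complex.arg z < 0 then Complex.arg z + 2 * π else Complex.arg z

/-- If cos β ≤ 0 then β lies in a band [π/2 + 2πk, 3π/2 + 2πk]. -/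
lemma band_of_cos_nonpos {β : ℝ} (h : Real.cos β ≤ 0) :
    ∃ k : ℤ, π / 2 + 2 * π * k ≤ β ∧ β ≤ 3 * π / 2 + 2 * π * k := by
  have hπ := Real.pi_pos
  set k : ℤ := ⌊β / (2 * π)⌋ with hk
  have h2π : (0:ℝ) < 2 * π := by linarith
  have h1 : (k : ℝ) ≤ β / (2 * π) := Int.floor_le _
  have h2 : β / (2 * π) < k + 1 := Int.lt_floor_add_one _
  have hlb : 2 * π * k ≤ β := by
    have := mul_le_mul_of_nonneg_left h1 h2π.le
    rw [mul_div_cancel₀ _ h2π.ne'] at this; linarith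
  have hub : β < 2 * π * k + 2 * π := by
    have := mul_lt_mul_of_pos_left h2 h2π
    rw [mul_div_cancel₀ _ h2π.ne'] at this; linarith
  set β' := β - 2 * π * k with hβ'
  have hcos' : Real.cos β' = Real.cos β := by
    have hb : β = β' + k * (2 * π) := by ring
    rw [hb, Real.cos_add_int_mul_two_pi]
  have hβ'0 : 0 ≤ β' := by simp only [hβ']; linarith
  have hβ'2 : β' < 2 * π := by simp only [hβ']; linarith
  refine ⟨k, ?_, ?_⟩
  · by_contra hcon
    push_neg at hcon
    have hp : 0 < Real.cos β' := by
      apply Real.cos_pos_of_mem_Ioo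
      constructor <;> simp only [hβ'] <;> linarith
    rw [hcos'] at hp; linarith
  · by_contra hcon
    push_neg at hcon
    have hp : 0 < Real.cos (β' - 2 * π) := by
      apply Real.cos_pos_of_mem_Ioo
      constructor <;> simp only [hβ'] <;> linarith
    rw [show β' - 2 * π = β' + (-1 : ℤ) * (2 * π) by push_cast; ring,
      Real.cos_add_int_mul_two_pi, hcos'] at hp
    linarith

/-- The key real lemma: for any shift ψ some shifted angle has positive cosine. -/
lemma exists_pos_cos (N : ℕ) (hN1 : 1 ≤ N) (α : ℕ → ℝ)
    (hmono : ∀ j, 1 ≤ j → j < N → α j ≤ α (j + 1) ∧ α (j + 1) < α j + π)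
    (hlast : α 1 + π < α N) (ψ : ℝ) :
    ∃ j, 1 ≤ j ∧ j ≤ N ∧ 0 < Real.cos (α j + ψ) := by
  have hπ := Real.pi_pos
  by_contra hc
  push_neg at hc
  have hband : ∀ j, 1 ≤ j → j ≤ N → ∃ k : ℤ,
      π / 2 + 2 * π * k ≤ α j + ψ ∧ α j + ψ ≤ 3 * π / 2 + 2 * π * k := by
    intro j h1 h2
    exact band_of_cos_nonpos (hc j h1 h2)
  choose! k hk1 hk2 using hband
  have hkeq : ∀ j, 1 ≤ j → j ≤ N → k j = k 1 := by
    intro j h1 h2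
    induction j with
    | zero => omega
    | succ n ih =>
      rcases Nat.eq_or_lt_of_le h1 with h | h
      · rw [← h]
      · have hn1 : 1 ≤ n := by omega
        have hnN : n < N := by omega
        have hkn := ih hn1 (by omega)
        obtain ⟨hle, hlt⟩ := hmono n hn1 hnN
        have a1 := hk1 n hn1 hnN.le
        have a2 := hk2 n hn1 hnN.le
        have b1 := hk1 (n+1) (by omega) h2
        have b2 := hk2 (n+1) (by omega) h2
        have heq : k (n+1) = k n := by
          by_contra hne
          rcases lt_or_gt_of_ne hne with hlt' | hgt
          · have : (k (n+1) : ℝ) + 1 ≤ k n := by exact_mod_cast hlt'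
            nlinarith
          · have : (k n : ℝ) + 1 ≤ k (n+1) := by exact_mod_cast hgt
            nlinarith
        rw [heq, hkn]
  have c1 := hk1 1 le_rfl hN1
  have cN2 := hk2 N hN1 le_rfl
  rw [hkeq N hN1 le_rfl] at cN2
  push_cast at c1 cN2
  linarith

theorem stmt_17 (N : ℕ) (hN : 3 ≤ N) (b : ℕ → ℂ)
    (hb0 : ∀ j, 1 ≤ j → j ≤ N → b j ≠ 0)
    (hmono : ∀ j, 1 ≤ j → j < N →
      arg2pi (b j) ≤ arg2pi (b (j + 1)) ∧ arg2pi (b (j + 1)) < arg2pi (b j) + π)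
    (hlast : arg2pi (b 1) + π < arg2pi (b N))
    (d : ℕ) (hd : 0 < d) :
    ∃ C > (0:ℝ), ∀ z : ℂ, ∃ j, 1 ≤ j ∧ j ≤ N ∧
      2 * C * ‖z‖ ^ d ≤ (b j * z ^ d).re := by
  have hπ := Real.pi_pos
  set S : Finset ℕ := Finset.Icc 1 N with hS
  have hSne : S.Nonempty := ⟨1, by simp [hS, Finset.mem_Icc]; omega⟩
  set F : ℝ → ℝ := fun ψ =>
    S.sup' hSne (fun j => (b j * Complex.exp ((ψ : ℂ) * Complex.I)).re) with hF
  have hre : ∀ (j : ℕ) (ψ : ℝ), (b j * Complex.exp ((ψ : ℂ) * Complex.I)).re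
      = ‖b j‖ * Real.cos (Complex.arg (b j) + ψ) := by
    intro j ψ
    conv_lhs => rw [← Complex.norm_mul_exp_arg_mul_I (b j)]
    rw [mul_assoc, ← Complex.exp_add,
      show (Complex.arg (b j) : ℂ) * Complex.I + (ψ : ℂ) * Complex.I
        = ((Complex.arg (b j) + ψ : ℝ) : ℂ) * Complex.I by push_cast; ring,
      Complex.re_ofReal_mul, Complex.exp_ofReal_mul_I_re]
  have hcos2pi : ∀ (j : ℕ) (ψ : ℝ),
      Real.cos (Complex.arg (b j) + ψ) = Real.cos (arg2pi (b j) + ψ) := by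
    intro j ψ
    unfold arg2pi
    split_ifs with h
    · rw [show Complex.arg (b j) + 2 * π + ψ = (Complex.arg (b j) + ψ) + (1:ℤ) * (2*π) by
        push_cast; ring, Real.cos_add_int_mul_two_pi]
    · rfl
  have hFpos : ∀ ψ : ℝ, 0 < F ψ := by
    intro ψ
    obtain ⟨j, h1, h2, h3⟩ := exists_pos_cos N (by omega) (fun j => arg2pi (b j)) hmono hlast ψ
    have hb : 0 < ‖b j‖ := by
      rw [norm_pos_iff]; exact hb0 j h1 h2
    have hp : 0 < (b j * Complex.exp ((ψ : ℂ) * Complex.I)).re := by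
      rw [hre, hcos2pi]; positivity
    calc (0:ℝ) < _ := hp
      _ ≤ F ψ := by
          simp only [hF]
          exact Finset.le_sup' (fun i => (b i * Complex.exp ((ψ : ℂ) * Complex.I)).re) (show j ∈ S from Finset.mem_Icc.2 ⟨h1, h2⟩)
  have hFcont : Continuous F := by
    apply Continuous.finset_sup'_apply hSne
    intro j _
    exact Complex.continuous_re.comp
      (continuous_const.mul ((Complex.continuous_ofReal.mul continuous_const).cexp))
  have hFper : Function.Periodic F (2 * π) := by
    intro ψ
    have key : ∀ j : ℕ, (b j * Complex.exp (((ψ + 2*π : ℝ) : ℂ) * Complex.I)).re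
        = (b j * Complex.exp ((ψ : ℂ) * Complex.I)).re := by
      intro j
      congr 2
      rw [show ((ψ + 2*π : ℝ) : ℂ) * Complex.I = (ψ : ℂ) * Complex.I + 2*π*Complex.I by
        push_cast; ring, Complex.exp_add, Complex.exp_two_pi_mul_I, mul_one]
    simp only [hF]
    exact Finset.sup'_congr hSne rfl (fun j _ => key j)
  obtain ⟨ψ0, hψ0mem, hψ0min⟩ :=
    (isCompact_Icc (a := (0:ℝ)) (b := 2*π)).exists_isMinOn
      (Set.nonempty_Icc.2 (by linarith)) hFcont.continuousOn
  refine ⟨F ψ0 / 2, by linarith [hFpos ψ0], ?_⟩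
  intro z
  by_cases hz : z = 0
  · refine ⟨1, le_rfl, by omega, ?_⟩
    simp [hz, zero_pow hd.ne']
  · set ψ : ℝ := Complex.arg (z ^ d) with hψ
    have hFψ : F ψ0 ≤ F ψ := by
      obtain ⟨y, hy, hxy⟩ := hFper.exists_mem_Ico₀ (by linarith) ψ
      rw [hxy]
      exact hψ0min (Set.mem_Icc.2 ⟨hy.1, hy.2.le⟩)
    obtain ⟨j, hjS, hjval⟩ := Finset.exists_mem_eq_sup' hSne
      (fun j => (b j * Complex.exp ((ψ : ℂ) * Complex.I)).re)
    simp only [hS, Finset.mem_Icc] at hjS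
    refine ⟨j, hjS.1, hjS.2, ?_⟩
    have hzd : z ^ d = ((‖z ^ d‖ : ℝ) : ℂ) * Complex.exp ((ψ : ℂ) * Complex.I) :=
      (Complex.norm_mul_exp_arg_mul_I (z ^ d)).symm
    have hkey : (b j * z ^ d).re
        = ‖z‖ ^ d * (b j * Complex.exp ((ψ : ℂ) * Complex.I)).re := by
      conv_lhs => rw [hzd]
      rw [show b j * (((‖z^d‖ : ℝ) : ℂ) * Complex.exp ((ψ : ℂ) * Complex.I))
          = ((‖z^d‖ : ℝ) : ℂ) * (b j * Complex.exp ((ψ : ℂ) * Complex.I)) by ring,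
        Complex.re_ofReal_mul, norm_pow]
    rw [hkey]
    have h1 : F ψ0 ≤ (b j * Complex.exp ((ψ : ℂ) * Complex.I)).re := hFψ.trans_eq hjval
    have h2 : (0:ℝ) ≤ ‖z‖ ^ d := by positivity
    calc 2 * (F ψ0 / 2) * ‖z‖ ^ d = ‖z‖ ^ d * F ψ0 := by ring
      _ ≤ _ := mul_le_mul_of_nonneg_left h1 h2
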